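/- For the wheel graph W_n, GA(W_n) < ABC(W_n) for every integer n ≥ 195; explicitly, 1 + 2√(3(n−1))/(n+2) < 2/3 + √(n/(3(n−1))) for n ≥ 195. -/

import Mathlib

open SimpleGraph

/-- The first geometric-arithmetic index of a finite simple graph:
`GA(G) = Σ_{uv ∈ E(G)} 2√(dᵤ dᵥ)/(dᵤ + dᵥ)`. -/
noncomputable def GA {V : Type*} [Finite V] (G : SimpleGraph V) : ℝ := by
  classical
  have : Fintype V := Fintype.ofFinite V
  exact ∑ e ∈ G.edgeFinset,
    Sym2.lift ⟨fun u v =>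
      2 * Real.sqrt ((G.degree u : ℝ) * (G.degree v : ℝ)) /
        ((G.degree u : ℝ) + (G.degree v : ℝ)),
      fun u v => by
        dsimp only; rw [mul_comm ((G.degree u : ℝ)), add_comm ((G.degree u : ℝ))]⟩ e

/-- The atom-bond connectivity index of a finite simple graph:
`ABC(G) = Σ_{uv ∈ E(G)} √((dᵤ + dᵥ - 2)/(dᵤ dᵥ))`. -/
noncomputable def ABC {V : Type*} [Finite V] (G : SimpleGraph V) : ℝ := by
  classical
  have : Fintype V := Fintype.ofFinite V
  exact ∑ e ∈ G.edgeFinset,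
    Sym2.lift ⟨fun u v =>
      Real.sqrt (((G.degree u : ℝ) + (G.degree v : ℝ) - 2) /
        ((G.degree u : ℝ) * (G.degree v : ℝ))),
      fun u v => by
        dsimp only; rw [mul_comm ((G.degree u : ℝ)), add_comm ((G.degree u : ℝ))]⟩ e

/-- The degree of a vertex (classical wrapper around `SimpleGraph.degree`). -/
noncomputable def deg {V : Type*} [Finite V] (G : SimpleGraph V) (v : V) : ℕ := by
  classical
  have : Fintype V := Fintype.ofFinite V
  exact G.degree v

/-- The maximum degree `Δ` of a finite simple graph. -/
noncomputable def maxDeg {V : Type*} [Finite V] (G : SimpleGraph V) : ℕ := by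
  classical
  have : Fintype V := Fintype.ofFinite V
  exact G.maxDegree

/-- The minimum degree `δ` of a finite simple graph. -/
noncomputable def minDeg {V : Type*} [Finite V] (G : SimpleGraph V) : ℕ := by
  classical
  have : Fintype V := Fintype.ofFinite V
  exact G.minDegree

/-- The wheel graph on `m + 1` vertices: a hub vertex `none` joined to every vertex of the
cycle `C_m` on the rim vertices `some a`, `a : Fin m`. For `n ≥ 4`, the wheel `W_n` on `n`
vertices is `wheelGraph (n - 1)`. -/
def wheelGraph (m : ℕ) : SimpleGraph (Option (Fin m)) :=
  SimpleGraph.fromRel (fun u v =>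
    u = none ∨ ∃ a b : Fin m, u = some a ∧ v = some b ∧ (cycleGraph m).Adj a b)



set_option maxHeartbeats 1000000 in
lemma key (x : ℝ) (hx : 195 ≤ x) :
    1 + 2 * Real.sqrt (3 * (x - 1)) / (x + 2) < 2/3 + Real.sqrt (x / (3 * (x - 1))) := by
  have hx1 : (0:ℝ) < x - 1 := by linarith
  have hx2 : (0:ℝ) < x + 2 := by linarith
  set s := Real.sqrt (3 * (x - 1)) with hsdef
  have hs0 : 0 ≤ s := Real.sqrt_nonneg _
  have hs2 : s ^ 2 = 3 * (x - 1) := Real.sq_sqrt (by linarith)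
  set t := Real.sqrt (x / (3 * (x - 1))) with htdef
  have ht0 : 0 ≤ t := Real.sqrt_nonneg _
  have ht2 : t ^ 2 = x / (3 * (x - 1)) := Real.sq_sqrt (by positivity)
  set A := 2 * s / (x + 2) with hAdef
  have hA0 : 0 ≤ A := by positivity
  have hA2 : A ^ 2 = 12 * (x - 1) / (x + 2) ^ 2 := by
    rw [hAdef, div_pow, mul_pow, hs2]; ring_nf
  set P := t ^ 2 - 1/9 - A ^ 2 with hPdef
  have hP : P = (3*x*(x+2)^2 - (x-1)*(x+2)^2 - 108*(x-1)^2) / (9*(x-1)*(x+2)^2) := by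
    rw [hPdef, ht2, hA2]
    field_simp
    ring
  have hNum : (0:ℝ) < 3*x*(x+2)^2 - (x-1)*(x+2)^2 - 108*(x-1)^2 := by
    nlinarith [sq_nonneg (x - 195)]
  have hPpos : 0 < P := by
    rw [hP]; positivity
  have hd : (0:ℝ) ≤ x - 195 := by linarith
  have hQpoly : 432*(x-1)^3*(x+2)^2
      < (3*x*(x+2)^2 - (x-1)*(x+2)^2 - 108*(x-1)^2)^2 := by
    nlinarith [hd, pow_nonneg hd 2, pow_nonneg hd 3, pow_nonneg hd 4, pow_nonneg hd 5,
      pow_nonneg hd 6]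
  have hident : P^2 - 4/9 * A^2 =
      ((3*x*(x+2)^2 - (x-1)*(x+2)^2 - 108*(x-1)^2)^2 - 432*(x-1)^3*(x+2)^2)
        / (81*(x-1)^2*(x+2)^4) := by
    rw [hP, hA2]
    field_simp
    ring
  have hQ : (4/9) * A ^ 2 < P ^ 2 := by
    have hpos : 0 < P^2 - 4/9 * A^2 := by
      rw [hident]; exact div_pos (by linarith) (by positivity)
    linarith
  have h23 : (2/3) * A < P := by
    by_contra hcon
    push_neg at hcon
    have hle := pow_le_pow_left₀ hPpos.le hcon 2
    nlinarith [hQ]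
  have hsq : (A + 1/3) ^ 2 < t ^ 2 := by nlinarith [h23]
  have hAt : A + 1/3 < t := by nlinarith [hsq, ht0, hA0]
  linarith

section WheelAux

open Finset

lemma wheel_adj_none_some (m : ℕ) (a : Fin m) : (wheelGraph m).Adj none (some a) := by
  rw [wheelGraph, fromRel_adj]
  exact ⟨by simp, Or.inl (Or.inl rfl)⟩

lemma wheel_adj_some_some (m : ℕ) (a b : Fin m) :
    (wheelGraph m).Adj (some a) (some b) ↔ (cycleGraph m).Adj a b := by
  rw [wheelGraph, fromRel_adj]
  constructor
  · rintro ⟨hne, h | h⟩ <;>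
    · rcases h with h | ⟨c, d, hc, hd, hcd⟩
      · simp at h
      · simp only [Option.some.injEq] at hc hd
        subst hc; subst hd
        first
        | exact hcd
        | exact hcd.symm
  · intro h
    exact ⟨by simpa using h.ne, Or.inl (Or.inr ⟨a, b, rfl, rfl, h⟩)⟩

lemma wheel_deg_none (m : ℕ) (inst : Fintype ((wheelGraph m).neighborSet none)) :
    @SimpleGraph.degree _ (wheelGraph m) none inst = m := by
  have h : @SimpleGraph.neighborFinset _ (wheelGraph m) none inst = univ.image some := by
    ext v
    rcases v with _ | a
    · simp [mem_neighborFinset, (wheelGraph m).loopless.irrefl none]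
    · simp [mem_neighborFinset, wheel_adj_none_some]
  rw [SimpleGraph.degree, h, Finset.card_image_of_injective _ (Option.some_injective _)]
  simp

lemma cycle_adj_iff {k : ℕ} (a b : Fin (k + 3)) :
    (cycleGraph (k + 3)).Adj a b ↔ b = a - 1 ∨ b = a + 1 := by
  rw [@cycleGraph_adj (k + 1) a b, sub_eq_iff_eq_add, sub_eq_iff_eq_add]
  constructor
  · rintro (h | h)
    · subst h; left; abel
    · subst h; right; abel
  · rintro (h | h)
    · subst h; left; abel
    · subst h; right; abel

lemma two_ne_zero_fin {k : ℕ} : (1 : Fin (k + 3)) + 1 ≠ 0 := by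
  intro h
  have h' : ((1 : Fin (k + 3)).val + (1 : Fin (k + 3)).val) % (k + 3) = (0 : Fin (k + 3)).val := by
    rw [← Fin.val_add, h]
  rw [Fin.val_one, Fin.val_zero, Nat.mod_eq_of_lt (by omega)] at h'
  omega

lemma wheel_deg_some {k : ℕ} (a : Fin (k + 3))
    (inst : Fintype ((wheelGraph (k + 3)).neighborSet (some a))) :
    @SimpleGraph.degree _ (wheelGraph (k + 3)) (some a) inst = 3 := by
  have hadj : (wheelGraph (k + 3)).Adj (some a) none :=
    ((wheelGraph (k + 3)).adj_symm (wheel_adj_none_some _ a))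
  have h : @SimpleGraph.neighborFinset _ (wheelGraph (k + 3)) (some a) inst
      = {none, some (a - 1), some (a + 1)} := by
    ext v
    rcases v with _ | b
    · simp [mem_neighborFinset, hadj]
    · simp [mem_neighborFinset, wheel_adj_some_some, cycle_adj_iff]
  rw [SimpleGraph.degree, h]
  rw [Finset.card_insert_of_notMem (by simp), Finset.card_insert_of_notMem,
    Finset.card_singleton]
  simp only [Finset.mem_singleton, Option.some.injEq]
  intro hab
  exact two_ne_zero_fin (k := k) (by open Fin.CommRing in linear_combination -hab)

lemma wheel_edge_sum {k : ℕ} (inst : Fintype (wheelGraph (k+3)).edgeSet)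
    (f : Sym2 (Option (Fin (k+3))) → ℝ) :
    ∑ e ∈ @SimpleGraph.edgeFinset _ (wheelGraph (k+3)) inst, f e
      = (∑ a : Fin (k+3), f s(none, some a)) + ∑ a : Fin (k+3), f s(some a, some (a + 1)) := by
  classical
  set S : Finset (Sym2 (Option (Fin (k+3)))) := univ.image (fun a => s(none, some a)) with hS
  set R : Finset (Sym2 (Option (Fin (k+3)))) :=
    univ.image (fun a : Fin (k+3) => s(some a, some (a+1))) with hR
  have hSR : @SimpleGraph.edgeFinset _ (wheelGraph (k+3)) inst = S ∪ R := by
    ext e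
    refine Sym2.ind (fun u v => ?_) e
    rw [mem_edgeFinset, mem_edgeSet]
    simp only [hS, hR, Finset.mem_union, Finset.mem_image, Finset.mem_univ, true_and,
      Sym2.eq_iff]
    rcases u with _ | a <;> rcases v with _ | b
    · simp [(wheelGraph (k+3)).loopless]
    · simp [wheel_adj_none_some]
    · exact ⟨fun _ => Or.inl ⟨a, Or.inr ⟨rfl, rfl⟩⟩,
        fun _ => (wheelGraph (k+3)).adj_symm (wheel_adj_none_some _ a)⟩
    · rw [wheel_adj_some_some, cycle_adj_iff]
      constructor
      · rintro (h | h)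
        · right; exact ⟨b, Or.inr ⟨rfl, by rw [h]; congr 1; abel⟩⟩
        · right; exact ⟨a, Or.inl ⟨rfl, by rw [h]⟩⟩
      · rintro (⟨c, ⟨h1, h2⟩ | ⟨h1, h2⟩⟩ | ⟨c, ⟨h1, h2⟩ | ⟨h1, h2⟩⟩)
        · exact absurd h1 (by simp)
        · exact absurd h1 (by simp)
        · simp only [Option.some.injEq] at h1 h2
          right; rw [← h2, h1]
        · simp only [Option.some.injEq] at h1 h2
          left; rw [← h1, ← h2]; abel
  have hdisj : Disjoint S R := by
    rw [Finset.disjoint_left]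
    rintro e heS heR
    simp only [hS, hR, Finset.mem_image, Finset.mem_univ, true_and] at heS heR
    obtain ⟨a, ha⟩ := heS
    obtain ⟨b, hb⟩ := heR
    rw [← hb] at ha
    simp [Sym2.eq_iff] at ha
  rw [hSR, Finset.sum_union hdisj, hS, hR, Finset.sum_image, Finset.sum_image]
  · intro a _ b _ h
    simp only [Sym2.eq_iff, Option.some.injEq] at h
    rcases h with ⟨h1, _⟩ | ⟨h1, h2⟩
    · exact h1
    · exact absurd (by open Fin.CommRing in linear_combination h2 - h1 : (1 : Fin (k+3)) + 1 = 0) two_ne_zero_fin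
  · intro a _ b _ h
    simp only [Sym2.eq_iff, Option.some.injEq] at h
    tauto

lemma GA_wheel (k : ℕ) :
    GA (wheelGraph (k + 3)) =
      ((k : ℝ) + 3) *
        (2 * Real.sqrt (3 * ((k : ℝ) + 3)) / (((k : ℝ) + 3) + 3) + 1) := by
  unfold GA
  dsimp only
  rw [wheel_edge_sum]
  simp only [Sym2.lift_mk, wheel_deg_none, wheel_deg_some]
  rw [Finset.sum_const, Finset.sum_const, Finset.card_univ, Fintype.card_fin,
    nsmul_eq_mul, nsmul_eq_mul]
  have h9 : Real.sqrt ((3 : ℝ) * 3) = 3 := Real.sqrt_mul_self (by norm_num)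
  push_cast
  rw [h9, mul_comm ((k : ℝ) + 3) 3]
  ring

lemma ABC_wheel (k : ℕ) :
    ABC (wheelGraph (k + 3)) =
      ((k : ℝ) + 3) *
        (Real.sqrt ((((k : ℝ) + 3) + 1) / (3 * ((k : ℝ) + 3))) + 2 / 3) := by
  unfold ABC
  dsimp only
  rw [wheel_edge_sum]
  simp only [Sym2.lift_mk, wheel_deg_none, wheel_deg_some]
  rw [Finset.sum_const, Finset.sum_const, Finset.card_univ, Fintype.card_fin,
    nsmul_eq_mul, nsmul_eq_mul]
  have h49 : Real.sqrt (((3 : ℝ) + 3 - 2) / (3 * 3)) = 2 / 3 := by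
    rw [show ((3 : ℝ) + 3 - 2) / (3 * 3) = (2 / 3) ^ 2 by norm_num]
    exact Real.sqrt_sq (by norm_num)
  push_cast
  rw [h49, show ((k:ℝ) + 3 + 3 - 2) = ((k:ℝ) + 3) + 1 by ring,
    mul_comm ((k : ℝ) + 3) 3]
  ring

end WheelAux

/-- For every integer `n ≥ 195`, the wheel graph `W_n` satisfies
`GA(W_n) < ABC(W_n)`; explicitly, `1 + 2√(3(n−1))/(n+2) < 2/3 + √(n/(3(n−1)))`. -/
theorem stmt_17 (n : ℕ) (hn : 195 ≤ n) :
    GA (wheelGraph (n - 1)) < ABC (wheelGraph (n - 1)) ∧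
    1 + 2 * Real.sqrt (3 * ((n : ℝ) - 1)) / ((n : ℝ) + 2) <
      (2 : ℝ)/3 + Real.sqrt ((n : ℝ) / (3 * ((n : ℝ) - 1))) := by
  have hx : (195 : ℝ) ≤ (n : ℝ) := by exact_mod_cast hn
  have hkey := key (n : ℝ) hx
  refine ⟨?_, hkey⟩
  obtain ⟨k, hk⟩ : ∃ k, n - 1 = k + 3 := ⟨n - 4, by omega⟩
  rw [hk, GA_wheel, ABC_wheel]
  have hm : ((k : ℝ) + 3) = (n : ℝ) - 1 := by
    have : ((n - 1 : ℕ) : ℝ) = (n : ℝ) - 1 := by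
      rw [Nat.cast_sub (by omega)]; norm_num
    rw [← this, hk]; push_cast; ring
  rw [hm, show ((n:ℝ) - 1) + 3 = (n : ℝ) + 2 by ring,
    show ((n:ℝ) - 1) + 1 = (n : ℝ) by ring]
  have hpos : (0 : ℝ) < (n : ℝ) - 1 := by linarith
  apply mul_lt_mul_of_pos_left _ hpos
  linarith [hkey]
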